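/- arXiv:2101.03519 — 2 statements merged into one kernel-verified Lean document; each statement's English description precedes it below -/
import Mathlib

section
/- Let r be a normal separator path. Then r_0 and T are not strongly r-connected, r_{|r|−1} and S are not strongly r-connected, S and T are not strongly r-connected, and the reverse of r is not a normal separator path. -/
open SimpleGraph

namespace NSP

variable {V : Type*}

/-- A chordal graph: every cycle with at least four vertices has a chord,
i.e. an edge not on the cycle joining two vertices of the cycle. -/
def Chordal (G : SimpleGraph V) : Prop :=
  ∀ ⦃v : V⦄ (c : G.Walk v v), c.IsCycle → 4 ≤ c.length →
    ∃ u w : V, u ∈ c.support ∧ w ∈ c.support ∧ G.Adj u w ∧ s(u, w) ∉ c.edges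

/-- A path in `G`, given as a nonempty list of vertices with consecutive
vertices adjacent. -/
def IsPathSeq (G : SimpleGraph V) (p : List V) : Prop :=
  p ≠ [] ∧ p.Chain' G.Adj

/-- A simple path: a path all of whose vertices are distinct. -/
def IsSimpleSeq (G : SimpleGraph V) (p : List V) : Prop :=
  IsPathSeq G p ∧ p.Nodup

/-- The set of edges of a path sequence. -/
def edgesOf (p : List V) : Set (Sym2 V) :=
  {e | ∃ (i : ℕ) (h : i + 1 < p.length),
    e = s(p.get ⟨i, by omega⟩, p.get ⟨i + 1, h⟩)}

/-- A set of edges is separating if deleting it from `G` leaves a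
disconnected graph. -/
def Separating (G : SimpleGraph V) (D : Set (Sym2 V)) : Prop :=
  ¬ (G.deleteEdges D).Connected

/-- A path is separating if its edge set is separating. -/
def SeparatingPath (G : SimpleGraph V) (p : List V) : Prop :=
  Separating G (edgesOf p)

/-- The contiguous subpath `p_{i,j} = p_i → ⋯ → p_j`. -/
def subseq (p : List V) (i j : ℕ) : List V :=
  (p.take (j + 1)).drop i

/-- `q` is a contiguous subpath of `p`. -/
def ContigSub (q p : List V) : Prop :=
  ∃ i j : ℕ, i ≤ j ∧ j < p.length ∧ q = subseq p i j

/-- A separator path: a simple separating path that does not properly contain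
(as a contiguous subpath) a separating path. -/
def SeparatorPath (G : SimpleGraph V) (p : List V) : Prop :=
  IsSimpleSeq G p ∧ SeparatingPath G p ∧
    ∀ q : List V, ContigSub q p → q ≠ p → ¬ SeparatingPath G q

/-- `u` and `v` are weakly `p`-connected: some path between `u` and `v`
shares no edge with `p`. -/
def WeaklyConn (G : SimpleGraph V) (p : List V) (u v : V) : Prop :=
  ∃ q : List V, IsPathSeq G q ∧ q.head? = some u ∧ q.getLast? = some v ∧
    edgesOf q ∩ edgesOf p = ∅

/-- `u` and `v` are strongly `p`-connected: some path between `u` and `v`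
shares no edge with `p` and, except at its endpoints, no vertex with `p`. -/
def StronglyConn (G : SimpleGraph V) (p : List V) (u v : V) : Prop :=
  ∃ q : List V, IsPathSeq G q ∧ q.head? = some u ∧ q.getLast? = some v ∧
    edgesOf q ∩ edgesOf p = ∅ ∧
    ∀ (i : ℕ) (h : i < q.length), 0 < i → i + 1 < q.length → q.get ⟨i, h⟩ ∉ p

/-- A path `r` is traversable if some simple path from `S` to `T` contains
`r` as a contiguous subpath. -/
def Traversable (G : SimpleGraph V) (S T : V) (r : List V) : Prop :=
  ∃ p : List V, IsSimpleSeq G p ∧ p.head? = some S ∧ p.getLast? = some T ∧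
    ContigSub r p

/-- A bad vertex: the middle vertex of a traversable separator path with
exactly two edges. -/
def BadVertex (G : SimpleGraph V) (S T : V) (v : V) : Prop :=
  ∃ r : List V, SeparatorPath G r ∧ Traversable G S T r ∧ r.length = 3 ∧
    r[1]? = some v

/-- A separator path is useful if each two-edge segment is shorter than the
corresponding chord. -/
def Useful (w : Sym2 V → ℝ) (r : List V) : Prop :=
  ∀ (i : ℕ) (h : i + 2 < r.length),
    w s(r.get ⟨i, by omega⟩, r.get ⟨i + 1, by omega⟩) +
      w s(r.get ⟨i + 1, by omega⟩, r.get ⟨i + 2, h⟩) <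
      w s(r.get ⟨i, by omega⟩, r.get ⟨i + 2, h⟩)

/-- A normal separator path: traversable, useful, and with more than two
edges (i.e. at least four vertices). -/
def NormalSep (G : SimpleGraph V) (w : Sym2 V → ℝ) (S T : V) (r : List V) : Prop :=
  SeparatorPath G r ∧ Traversable G S T r ∧ Useful w r ∧ 3 < r.length

/-- `v` is an inner vertex of `r` (a vertex of `r` other than its endpoints). -/
def InnerMem (r : List V) (v : V) : Prop :=
  ∃ (i : ℕ) (h : i < r.length), 0 < i ∧ i + 1 < r.length ∧ r.get ⟨i, h⟩ = v

/-- The total length of a path with respect to edge lengths `w`. -/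
def pathLength (w : Sym2 V → ℝ) (p : List V) : ℝ :=
  ((p.zip p.tail).map fun q => w s(q.1, q.2)).sum

/-- All edges of `G` have positive length. -/
def EdgePos (G : SimpleGraph V) (w : Sym2 V → ℝ) : Prop :=
  ∀ e ∈ G.edgeSet, 0 < w e

/-- The subgraph of `G` formed by the edges of `D` together with their
endpoints. -/
def edgeSubgraph (G : SimpleGraph V) (D : Set (Sym2 V)) : G.Subgraph where
  verts := {v | ∃ e ∈ D ∩ G.edgeSet, v ∈ e}
  Adj u v := s(u, v) ∈ D ∧ G.Adj u v
  adj_sub h := h.2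
  edge_vert {v w} h := ⟨s(v, w), ⟨h.1, h.2⟩, Sym2.mem_mk_left v w⟩
  symm := ⟨fun u v h => by
    obtain ⟨h1, h2⟩ := h
    exact ⟨by rwa [Sym2.eq_swap], h2.symm⟩⟩

/-- For a simple path `P₀` in `G` and indices `i ≤ j < |P₀|`: in the graph
obtained by deleting the edges of `P₀` from `G`, vertices `P₀ₖ`
(`i ≤ k ≤ j`) of equal parity of index are in a common connected component,
while those of different parity are in different connected components. -/
def OddEvenSplit (G : SimpleGraph V) (P0 : List V) (i j : ℕ)
    (hj : j < P0.length) : Prop :=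
  (∀ (k l : ℕ) (hik : i ≤ k) (hkj : k ≤ j) (hil : i ≤ l) (hlj : l ≤ j),
      k % 2 = l % 2 →
      (G.deleteEdges (edgesOf P0)).Reachable
        (P0.get ⟨k, by omega⟩) (P0.get ⟨l, by omega⟩)) ∧
  (∀ (k l : ℕ) (hik : i ≤ k) (hkj : k ≤ j) (hil : i ≤ l) (hlj : l ≤ j),
      k % 2 ≠ l % 2 →
      ¬ (G.deleteEdges (edgesOf P0)).Reachable
        (P0.get ⟨k, by omega⟩) (P0.get ⟨l, by omega⟩))


section Helpers

lemma head?_eq_get (l : List V) (h : l ≠ []) :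
    l.head? = some (l.get ⟨0, List.length_pos_iff.mpr h⟩) := by
  cases l with
  | nil => simp at h
  | cons a t => rfl

lemma getLast?_eq_get (l : List V) (h : l ≠ []) :
    l.getLast? = some (l.get ⟨l.length - 1, by
      have := List.length_pos_iff.mpr h; omega⟩) := by
  rw [List.getLast?_eq_getLast h, List.getLast_eq_getElem]
  rfl

lemma get_congr {l : List V} {i j : ℕ} (h : i = j) (hi : i < l.length) :
    l.get ⟨i, hi⟩ = l.get ⟨j, h ▸ hi⟩ := by subst h; rfl

lemma get_inj {l : List V} (h : l.Nodup) {i j : ℕ} {hi : i < l.length} {hj : j < l.length}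
    (heq : l.get ⟨i, hi⟩ = l.get ⟨j, hj⟩) : i = j := by
  have := List.nodup_iff_injective_get.mp h heq
  exact congrArg Fin.val this

lemma mem_edgesOf (p : List V) {i : ℕ} (h : i + 1 < p.length) :
    s(p.get ⟨i, by omega⟩, p.get ⟨i + 1, h⟩) ∈ edgesOf p := ⟨i, h, rfl⟩

lemma mem_of_mem_edge {p : List V} {e : Sym2 V} (he : e ∈ edgesOf p) {v : V} (hv : v ∈ e) :
    v ∈ p := by
  obtain ⟨i, h, rfl⟩ := he
  rcases Sym2.mem_iff.mp hv with rfl | rfl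
  · exact List.get_mem _ _
  · exact List.get_mem _ _

lemma not_mem_edgesOf_left {p : List V} {x y : V} (hx : x ∉ p) : s(x, y) ∉ edgesOf p :=
  fun h => hx (mem_of_mem_edge h (Sym2.mem_mk_left x y))

lemma exists_walk_of_chain' (G : SimpleGraph V) (l : List V) :
    ∀ {x y : V}, l.Chain' G.Adj → l.head? = some x → l.getLast? = some y →
      ∃ P : G.Walk x y, P.support = l := by
  induction l with
  | nil => intro x y _ h _; simp at h
  | cons a t ih =>
    intro x y hc hh hl
    cases t with
    | nil =>
      simp only [List.head?_cons, Option.some.injEq] at hh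
      simp only [List.getLast?_singleton, Option.some.injEq] at hl
      subst hh; subst hl
      exact ⟨Walk.nil, rfl⟩
    | cons b t' =>
      obtain ⟨hab, hc'⟩ := List.isChain_cons_cons.mp hc
      simp only [List.head?_cons, Option.some.injEq] at hh
      subst hh
      rw [List.getLast?_cons_cons] at hl
      obtain ⟨P, hP⟩ := ih hc' rfl hl
      exact ⟨Walk.cons hab P, by simp [hP]⟩

lemma walk_support_pred {G : SimpleGraph V} {P : V → Prop}
    (hP : ∀ ⦃x y⦄, G.Adj x y → P x ∧ P y) :
    ∀ {x y : V} (w : G.Walk x y) (v : V), v ∈ w.support → v = x ∨ P v := by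
  intro x y w
  induction w with
  | nil => intro v hv; rw [Walk.support_nil, List.mem_singleton] at hv; exact Or.inl hv
  | @cons u v' y' h p ih =>
    intro v hv
    rw [Walk.support_cons, List.mem_cons] at hv
    rcases hv with rfl | hv
    · exact Or.inl rfl
    · rcases ih v hv with rfl | hvP
      · exact Or.inr (hP h).2
      · exact Or.inr hvP

lemma reach_of_mem_support {G : SimpleGraph V} {x y v : V} (w : G.Walk x y)
    (hv : v ∈ w.support) : G.Reachable x v := by
  classical
  exact ⟨w.takeUntil v hv⟩

lemma reach_trans_aux {A B : SimpleGraph V} {v₁ v₂ : V}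
    (h : ∀ ⦃x y⦄, B.Adj x y → A.Adj x y ∨ (x = v₁ ∧ y = v₂) ∨ (x = v₂ ∧ y = v₁))
    (h12 : A.Reachable v₁ v₂) {x y : V} (hxy : B.Reachable x y) : A.Reachable x y := by
  obtain ⟨w⟩ := hxy
  induction w with
  | nil => exact Reachable.refl _
  | cons ha p ih =>
    refine Reachable.trans ?_ ih
    rcases h ha with h' | ⟨rfl, rfl⟩ | ⟨rfl, rfl⟩
    · exact h'.reachable
    · exact h12
    · exact h12.symm

lemma reach_cover_aux {A B : SimpleGraph V} {v₁ v₂ : V}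
    (h : ∀ ⦃x y⦄, B.Adj x y → A.Adj x y ∨ (x = v₁ ∧ y = v₂) ∨ (x = v₂ ∧ y = v₁))
    {x y : V} (hxy : B.Reachable x y)
    (hx : A.Reachable v₁ x ∨ A.Reachable v₂ x) :
    A.Reachable v₁ y ∨ A.Reachable v₂ y := by
  obtain ⟨w⟩ := hxy
  induction w with
  | nil => exact hx
  | cons ha p ih =>
    apply ih
    rcases h ha with h' | ⟨rfl, rfl⟩ | ⟨rfl, rfl⟩
    · rcases hx with h1 | h1
      · exact Or.inl (h1.trans h'.reachable)
      · exact Or.inr (h1.trans h'.reachable)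
    · exact Or.inr (Reachable.refl _)
    · exact Or.inl (Reachable.refl _)

lemma length_pos_of_ne {G : SimpleGraph V} {x y : V} (w : G.Walk x y) (h : x ≠ y) :
    0 < w.length := by
  cases w with
  | nil => exact absurd rfl h
  | cons _ _ => simp [Walk.length_cons]

lemma edges_of_length_one {G : SimpleGraph V} {x y : V} {w : G.Walk x y} (h : w.length = 1) :
    w.edges = [s(x, y)] := by
  cases w with
  | nil => simp at h
  | cons ha p =>
    cases p with
    | nil => simp
    | cons _ _ => simp [Walk.length_cons] at h

lemma shortcut {G : SimpleGraph V} {x y : V} (P : G.Walk x y)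
    (hP : P.length = G.dist x y) {u w : V} (hu : u ∈ P.support) (hw : w ∈ P.support)
    (hadj : G.Adj u w) (hne : s(u, w) ∉ P.edges) : False := by
  classical
  have hTD : (P.takeUntil u hu).append (P.dropUntil u hu) = P := P.take_spec hu
  set T := P.takeUntil u hu with hT
  set D := P.dropUntil u hu with hD
  have hlenTD : T.length + D.length = P.length := by
    conv_rhs => rw [← hTD]
    rw [Walk.length_append]
  have hw' : w ∈ T.support ∨ w ∈ D.support := by
    have h2 := hw
    rw [← hTD, Walk.support_append] at h2
    rcases List.mem_append.mp h2 with h | h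
    · exact Or.inl h
    · exact Or.inr (List.mem_of_mem_tail h)
  rcases hw' with hwT | hwD
  · set T1 := T.takeUntil w hwT with hT1
    set T2 := T.dropUntil w hwT with hT2
    have h12 : T1.length + T2.length = T.length := by
      conv_rhs => rw [← T.take_spec hwT]
      rw [Walk.length_append]
    have hT2pos : 0 < T2.length := length_pos_of_ne _ (fun h => hadj.ne h.symm)
    have hT2ne1 : T2.length ≠ 1 := by
      intro h1
      have : s(w, u) ∈ T2.edges := by rw [edges_of_length_one h1]; exact List.mem_singleton.mpr rfl
      have : s(w, u) ∈ P.edges := P.edges_takeUntil_subset hu (T.edges_dropUntil_subset hwT this)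
      rw [Sym2.eq_swap] at this
      exact hne this
    have hcand := SimpleGraph.dist_le (T1.append (Walk.cons hadj.symm D))
    rw [Walk.length_append, Walk.length_cons] at hcand
    omega
  · set D1 := D.takeUntil w hwD with hD1
    set D2 := D.dropUntil w hwD with hD2
    have h12 : D1.length + D2.length = D.length := by
      conv_rhs => rw [← D.take_spec hwD]
      rw [Walk.length_append]
    have hD1pos : 0 < D1.length := length_pos_of_ne _ hadj.ne
    have hD1ne1 : D1.length ≠ 1 := by
      intro h1
      have : s(u, w) ∈ D1.edges := by rw [edges_of_length_one h1]; exact List.mem_singleton.mpr rfl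
      exact hne (P.edges_dropUntil_subset hu (D.edges_takeUntil_subset hwD this))
    have hcand := SimpleGraph.dist_le (T.append (Walk.cons hadj D2))
    rw [Walk.length_append, Walk.length_cons] at hcand
    omega

def predGraph (G : SimpleGraph V) (P : V → Prop) : SimpleGraph V where
  Adj x y := G.Adj x y ∧ P x ∧ P y
  symm := ⟨fun _ _ h => ⟨h.1.symm, h.2.2, h.2.1⟩⟩
  loopless := ⟨fun x h => G.loopless.irrefl x h.1⟩

lemma predGraph_adj {G : SimpleGraph V} {P : V → Prop} {x y : V} :
    (predGraph G P).Adj x y ↔ G.Adj x y ∧ P x ∧ P y := Iff.rfl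

lemma predGraph_walk_edges {G : SimpleGraph V} {P : V → Prop} {x y : V}
    (w : (predGraph G P).Walk x y) : ∀ e ∈ w.edges, e ∈ G.edgeSet := by
  intro e he
  have h := w.edges_subset_edgeSet he
  induction e with
  | _ u v =>
    rw [SimpleGraph.mem_edgeSet] at h
    exact h.1

end Helpers

lemma predGraph_support_ok {G : SimpleGraph V} {P : V → Prop} {x y : V}
    (w : (predGraph G P).Walk x y) : ∀ v ∈ w.support, v = x ∨ P v :=
  walk_support_pred (G := predGraph G P) (P := P) (fun _ _ h => ⟨h.2.1, h.2.2⟩) w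

lemma not_redge_of_ok {r : List V} (hnodup : r.Nodup) (hlen : 4 ≤ r.length)
    {a b u v : V} (ha : a = r.get ⟨0, by omega⟩) (hb : b = r.get ⟨r.length - 1, by omega⟩)
    (hu : u = a ∨ u = b ∨ u ∉ r) (hv : v = a ∨ v = b ∨ v ∉ r) :
    s(u, v) ∉ edgesOf r := by
  rintro ⟨i, hi, heq⟩
  have humem : u ∈ r := mem_of_mem_edge ⟨i, hi, heq⟩ (Sym2.mem_mk_left u v)
  have hvmem : v ∈ r := mem_of_mem_edge ⟨i, hi, heq⟩ (Sym2.mem_mk_right u v)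
  have hu' : u = a ∨ u = b := by
    rcases hu with h | h | h
    exacts [Or.inl h, Or.inr h, absurd humem h]
  have hv' : v = a ∨ v = b := by
    rcases hv with h | h | h
    exacts [Or.inl h, Or.inr h, absurd hvmem h]
  have idx : ∀ w : V, w = a ∨ w = b → ∀ (k : ℕ) (hk : k < r.length),
      w = r.get ⟨k, hk⟩ → k = 0 ∨ k = r.length - 1 := by
    rintro w (rfl | rfl) k hk hkw
    · exact Or.inl (get_inj hnodup (hkw.symm.trans ha))
    · exact Or.inr (get_inj hnodup (hkw.symm.trans hb))
  rcases Sym2.eq_iff.mp heq with ⟨h1, h2⟩ | ⟨h1, h2⟩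
  · have k1 := idx u hu' i (by omega) h1
    have k2 := idx v hv' (i + 1) hi h2
    omega
  · have k1 := idx u hu' (i + 1) hi h1
    have k2 := idx v hv' i (by omega) h2
    omega

lemma okwalk_reach {G : SimpleGraph V} {r : List V} (hnodup : r.Nodup) (hlen : 4 ≤ r.length)
    {a b x y : V} (ha : a = r.get ⟨0, by omega⟩) (hb : b = r.get ⟨r.length - 1, by omega⟩)
    (P : G.Walk x y) (hsup : ∀ v ∈ P.support, v = a ∨ v = b ∨ v ∉ r) :
    (predGraph (G.deleteEdges (edgesOf r)) (fun v => v = a ∨ v = b ∨ v ∉ r)).Reachable x y := by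
  refine ⟨P.transfer _ ?_⟩
  intro e he
  induction e with
  | _ u v =>
    have hG := P.edges_subset_edgeSet he
    rw [SimpleGraph.mem_edgeSet] at hG
    have hu := hsup _ (Walk.fst_mem_support_of_mem_edges P he)
    have hv := hsup _ (Walk.snd_mem_support_of_mem_edges P he)
    rw [SimpleGraph.mem_edgeSet]
    exact ⟨SimpleGraph.deleteEdges_adj.mpr ⟨hG, not_redge_of_ok hnodup hlen ha hb hu hv⟩, hu, hv⟩

theorem key {G : SimpleGraph V} (hch : Chordal G) {r : List V}
    (hsp : SeparatorPath G r) (hlen : 4 ≤ r.length) {a b : V}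
    (ha : a = r.get ⟨0, by omega⟩) (hb : b = r.get ⟨r.length - 1, by omega⟩) :
    ¬ (predGraph (G.deleteEdges (edgesOf r))
        (fun v => v = a ∨ v = b ∨ v ∉ r)).Reachable a b := by
  classical
  intro hreach
  obtain ⟨⟨⟨hrne, hchain⟩, hnodup⟩, hsep, hmin⟩ := hsp
  set H := G.deleteEdges (edgesOf r) with hH
  have h0lt : 0 < r.length := by omega
  have h1lt : 1 < r.length := by omega
  have hm1lt : r.length - 2 < r.length := by omega
  have hmlt : r.length - 1 < r.length := by omega
  set r1 := r.get ⟨1, h1lt⟩ with hr1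
  set rm1 := r.get ⟨r.length - 2, hm1lt⟩ with hrm1
  -- distinctness
  have hne_a_b : a ≠ b := by
    intro h; rw [ha, hb] at h; have := get_inj hnodup h; omega
  have hne_a_rm1 : a ≠ rm1 := by
    intro h; rw [ha, hrm1] at h; have := get_inj hnodup h; omega
  have hne_r1_a : r1 ≠ a := by
    intro h; rw [ha, hr1] at h; have := get_inj hnodup h; omega
  have hne_r1_b : r1 ≠ b := by
    intro h; rw [hb, hr1] at h; have := get_inj hnodup h; omega
  have hne_r1_rm1 : r1 ≠ rm1 := by
    intro h; rw [hr1, hrm1] at h; have := get_inj hnodup h; omega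
  -- adjacency
  have hadjget := List.isChain_iff_getElem.mp hchain
  have hadj01 : G.Adj a r1 := by
    have h := hadjget 0 (by omega)
    rw [ha, hr1]; exact h
  have hadjm : G.Adj rm1 b := by
    have h := hadjget (r.length - 2) (by omega)
    have e2 : r.get ⟨r.length - 2 + 1, by omega⟩ = r.get ⟨r.length - 1, by omega⟩ :=
      get_congr (by omega) _
    rw [hrm1, hb, ← e2]; exact h
  -- edge decompositions
  have hE1 : ∀ e ∈ edgesOf r, e = s(a, r1) ∨ e ∈ edgesOf (r.drop 1) := by
    rintro e ⟨i, hi, rfl⟩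
    cases i with
    | zero => left; rw [ha, hr1]
    | succ k =>
      right
      refine ⟨k, by simp only [List.length_drop]; omega, ?_⟩
      have e1 : r.get ⟨k + 1, by omega⟩ = (r.drop 1).get ⟨k, by simp only [List.length_drop]; omega⟩ := by
        rw [get_congr (show k + 1 = 1 + k by omega)]
        exact List.getElem_drop' (by omega)
      have e2 : r.get ⟨k + 1 + 1, hi⟩ = (r.drop 1).get ⟨k + 1, by simp only [List.length_drop]; omega⟩ := by
        rw [get_congr (show k + 1 + 1 = 1 + (k + 1) by omega)]
        exact List.getElem_drop' (by omega)
      rw [e1, e2]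
  have hE2 : ∀ e ∈ edgesOf r, e = s(rm1, b) ∨ e ∈ edgesOf (r.take (r.length - 1)) := by
    rintro e ⟨i, hi, rfl⟩
    have htklen : (r.take (r.length - 1)).length = r.length - 1 := by
      rw [List.length_take]; exact min_eq_left (by omega)
    by_cases hi' : i = r.length - 2
    · left
      subst hi'
      have e2 : r.get ⟨r.length - 2 + 1, hi⟩ = r.get ⟨r.length - 1, by omega⟩ :=
        get_congr (by omega) _
      rw [hrm1, hb, e2]
    · right
      refine ⟨i, by omega, ?_⟩
      have e1 : r.get ⟨i, by omega⟩ = (r.take (r.length - 1)).get ⟨i, by omega⟩ :=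
        by simp
      have e2 : r.get ⟨i + 1, hi⟩ = (r.take (r.length - 1)).get ⟨i + 1, by omega⟩ :=
        by simp
      rw [e1, e2]
  -- minimality consequences
  have hBconn : (G.deleteEdges (edgesOf (r.drop 1))).Connected := by
    have htail : r.drop 1 = subseq r 1 (r.length - 1) := by
      unfold subseq
      have h : r.length - 1 + 1 = r.length := by omega
      rw [h, List.take_length]
    have hne1 : r.drop 1 ≠ r := by
      intro h
      have := congrArg List.length h
      rw [List.length_drop] at this
      omega
    have h := hmin _ ⟨1, r.length - 1, by omega, by omega, htail⟩ hne1
    exact not_not.mp h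
  have hDconn : (G.deleteEdges (edgesOf (r.take (r.length - 1)))).Connected := by
    have htake : r.take (r.length - 1) = subseq r 0 (r.length - 2) := by
      unfold subseq
      rw [List.drop_zero]
      congr 1
      omega
    have hne2 : r.take (r.length - 1) ≠ r := by
      intro h
      have := congrArg List.length h
      rw [List.length_take, min_eq_left (by omega : r.length - 1 ≤ r.length)] at this
      omega
    have h := hmin _ ⟨0, r.length - 2, by omega, by omega, htake⟩ hne2
    exact not_not.mp h
  have hedgeB : ∀ ⦃x y⦄, (G.deleteEdges (edgesOf (r.drop 1))).Adj x y →
      H.Adj x y ∨ (x = a ∧ y = r1) ∨ (x = r1 ∧ y = a) := by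
    intro x y hxy
    rw [SimpleGraph.deleteEdges_adj] at hxy
    obtain ⟨hG, hnotin⟩ := hxy
    by_cases hmem : s(x, y) ∈ edgesOf r
    · rcases hE1 _ hmem with heq | hmem'
      · rcases Sym2.eq_iff.mp heq with ⟨h1, h2⟩ | ⟨h1, h2⟩
        · exact Or.inr (Or.inl ⟨h1, h2⟩)
        · exact Or.inr (Or.inr ⟨h1, h2⟩)
      · exact absurd hmem' hnotin
    · left; rw [hH]; exact SimpleGraph.deleteEdges_adj.mpr ⟨hG, hmem⟩
  have hedgeD : ∀ ⦃x y⦄, (G.deleteEdges (edgesOf (r.take (r.length - 1)))).Adj x y →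
      H.Adj x y ∨ (x = rm1 ∧ y = b) ∨ (x = b ∧ y = rm1) := by
    intro x y hxy
    rw [SimpleGraph.deleteEdges_adj] at hxy
    obtain ⟨hG, hnotin⟩ := hxy
    by_cases hmem : s(x, y) ∈ edgesOf r
    · rcases hE2 _ hmem with heq | hmem'
      · rcases Sym2.eq_iff.mp heq with ⟨h1, h2⟩ | ⟨h1, h2⟩
        · exact Or.inr (Or.inl ⟨h1, h2⟩)
        · exact Or.inr (Or.inr ⟨h1, h2⟩)
      · exact absurd hmem' hnotin
    · left; rw [hH]; exact SimpleGraph.deleteEdges_adj.mpr ⟨hG, hmem⟩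
  -- component structure
  have h01 : ¬ H.Reachable a r1 := by
    intro h
    exact hsep ((connected_iff H).mpr
      ⟨fun x y => reach_trans_aux hedgeB h (hBconn.preconnected x y), hBconn.nonempty⟩)
  have hm : ¬ H.Reachable rm1 b := by
    intro h
    exact hsep ((connected_iff H).mpr
      ⟨fun x y => reach_trans_aux hedgeD h (hDconn.preconnected x y), hDconn.nonempty⟩)
  have hcov : ∀ v, H.Reachable a v ∨ H.Reachable r1 v := fun v =>
    reach_cover_aux hedgeB (hBconn.preconnected a v) (Or.inl (Reachable.refl _))
  have hHab : H.Reachable a b := by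
    obtain ⟨P⟩ := hreach
    exact ⟨P.transfer H (predGraph_walk_edges P)⟩
  have hBm1 : H.Reachable r1 rm1 := by
    rcases hcov rm1 with h | h
    · exact absurd (h.symm.trans hHab) hm
    · exact h
  -- the two side graphs
  set L := predGraph G (fun v => ¬ H.Reachable a v) with hL
  have hLreach : L.Reachable r1 rm1 := by
    obtain ⟨P⟩ := hBm1
    refine ⟨P.transfer L ?_⟩
    intro e he
    induction e with
    | _ u v =>
      have hadj := P.edges_subset_edgeSet he
      rw [SimpleGraph.mem_edgeSet] at hadj
      have hGadj : G.Adj u v := by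
        rw [hH, SimpleGraph.deleteEdges_adj] at hadj; exact hadj.1
      have hnr : ∀ z ∈ P.support, ¬ H.Reachable a z := by
        intro z hz hr'
        exact h01 (hr'.trans (reach_of_mem_support P hz).symm)
      rw [SimpleGraph.mem_edgeSet]
      exact ⟨hGadj, hnr u (Walk.fst_mem_support_of_mem_edges P he),
        hnr v (Walk.snd_mem_support_of_mem_edges P he)⟩
  -- minimal-length pieces
  obtain ⟨W, hWlen⟩ := hLreach.exists_walk_length_eq_dist
  have hWpath := W.isPath_of_length_eq_dist hWlen
  obtain ⟨Q, hQlen⟩ := (hreach.symm).exists_walk_length_eq_dist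
  have hQpath := Q.isPath_of_length_eq_dist hQlen
  have hWsup : ∀ v ∈ W.support, ¬ H.Reachable a v := by
    intro v hv
    rcases predGraph_support_ok W v hv with rfl | h
    · exact h01
    · exact h
  have hQok : ∀ v ∈ Q.support, v = a ∨ v = b ∨ v ∉ r := by
    intro v hv
    rcases predGraph_support_ok Q v hv with rfl | h
    · exact Or.inr (Or.inl rfl)
    · exact h
  have hQH : ∀ e ∈ Q.edges, e ∈ H.edgeSet := predGraph_walk_edges Q
  have hQA : ∀ v ∈ Q.support, H.Reachable a v := by
    intro v hv
    have hv' : v ∈ (Q.transfer H hQH).support := by rw [Walk.support_transfer]; exact hv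
    exact hHab.trans (reach_of_mem_support _ hv')
  have hdisj : ∀ v ∈ W.support, v ∉ Q.support := fun v h1 h2 => hWsup v h1 (hQA v h2)
  -- the cycle
  have hWG : ∀ e ∈ W.edges, e ∈ G.edgeSet := predGraph_walk_edges W
  have hQG : ∀ e ∈ Q.edges, e ∈ G.edgeSet := fun e he =>
    SimpleGraph.edgeSet_mono (SimpleGraph.deleteEdges_le _) (hQH e he)
  set Wg := W.transfer G hWG with hWg
  set Qg := Q.transfer G hQG with hQg
  set rest := Wg.append (Walk.cons hadjm Qg) with hrest
  set C := Walk.cons hadj01 rest with hC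
  have hrestsup : rest.support = W.support ++ Q.support := by
    rw [hrest, Walk.support_append, Walk.support_cons, hWg, hQg,
      Walk.support_transfer, Walk.support_transfer, List.tail_cons]
  have hrestpath : rest.IsPath := by
    rw [Walk.isPath_def, hrestsup]
    exact List.Nodup.append ((Walk.isPath_def _).mp hWpath) ((Walk.isPath_def _).mp hQpath)
      (fun v h1 h2 => hdisj v h1 h2)
  have hCedges : C.edges = s(a, r1) :: (W.edges ++ (s(rm1, b) :: Q.edges)) := by
    rw [hC, Walk.edges_cons, hrest, Walk.edges_append, Walk.edges_cons, hWg, hQg,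
      Walk.edges_transfer, Walk.edges_transfer]
  have hedge0 : s(a, r1) ∉ rest.edges := by
    have hre : rest.edges = W.edges ++ (s(rm1, b) :: Q.edges) := by
      rw [hrest, Walk.edges_append, Walk.edges_cons, hWg, hQg,
        Walk.edges_transfer, Walk.edges_transfer]
    rw [hre]
    intro hmem
    rcases List.mem_append.mp hmem with h | h
    · exact hWsup a (Walk.fst_mem_support_of_mem_edges W h) (Reachable.refl a)
    · rcases List.mem_cons.mp h with h | h
      · rcases Sym2.eq_iff.mp h with ⟨h1, h2⟩ | ⟨h1, h2⟩
        · exact hne_a_rm1 h1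
        · exact hne_a_b h1
      · have hmem2 : r1 ∈ Q.support := Walk.snd_mem_support_of_mem_edges Q h
        rcases hQok r1 hmem2 with h' | h' | h'
        · exact hne_r1_a h'
        · exact hne_r1_b h'
        · exact h' (by rw [hr1]; exact List.get_mem _ _)
  have hcyc : C.IsCycle := (Walk.cons_isCycle_iff rest hadj01).mpr ⟨hrestpath, hedge0⟩
  have hClen : 4 ≤ C.length := by
    have w1 : 0 < W.length := length_pos_of_ne W hne_r1_rm1
    have q1 : 0 < Q.length := length_pos_of_ne Q (fun h => hne_a_b h.symm)
    have : C.length = W.length + Q.length + 2 := by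
      rw [hC, Walk.length_cons, hrest, Walk.length_append, Walk.length_cons, hWg, hQg,
        Walk.length_transfer, Walk.length_transfer]
      omega
    omega
  obtain ⟨u, x, hu, hx, huxadj, huxne⟩ := hch C hcyc hClen
  have hCsup : C.support = a :: (W.support ++ Q.support) := by
    rw [hC, Walk.support_cons, hrestsup]
  have hloc : ∀ z, z ∈ C.support → z ∈ W.support ∨ z ∈ Q.support := by
    intro z hz
    rw [hCsup] at hz
    rcases List.mem_cons.mp hz with rfl | hz
    · exact Or.inr Q.end_mem_support
    · exact List.mem_append.mp hz
  -- the mixed chord case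
  have mixed : ∀ u x : V, u ∈ W.support → x ∈ Q.support → G.Adj u x →
      s(u, x) ∉ C.edges → False := by
    intro u x huW hxQ hadjux hnotC
    by_cases hmem : s(u, x) ∈ edgesOf r
    · obtain ⟨i, hi, heq⟩ := hmem
      have hxmem : x ∈ r := mem_of_mem_edge ⟨i, hi, heq⟩ (Sym2.mem_mk_right u x)
      rcases hQok x hxQ with hx0 | hxm | hxr
      · -- x = a
        rcases Sym2.eq_iff.mp heq with ⟨h1, h2⟩ | ⟨h1, h2⟩
        · have : i + 1 = 0 := get_inj hnodup (h2.symm.trans (hx0.trans ha))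
          omega
        · have hieq : i = 0 := get_inj hnodup (h2.symm.trans (hx0.trans ha))
          apply hnotC
          rw [hCedges]
          refine List.mem_cons.mpr (Or.inl ?_)
          subst hieq
          rw [h1, hx0, Sym2.eq_swap, ha, hr1]
        -- note both branches must end in contradiction/False
      · -- x = b
        rcases Sym2.eq_iff.mp heq with ⟨h1, h2⟩ | ⟨h1, h2⟩
        · have hieq : i + 1 = r.length - 1 :=
            get_inj hnodup (h2.symm.trans (hxm.trans hb)).symm |>.symm
          apply hnotC
          rw [hCedges]
          refine List.mem_cons.mpr (Or.inr (List.mem_append.mpr (Or.inr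
            (List.mem_cons.mpr (Or.inl ?_)))))
          have e1 : r.get ⟨i, by omega⟩ = rm1 := by
            rw [get_congr (show i = r.length - 2 by omega)]
          have e2 : r.get ⟨i + 1, hi⟩ = b := by
            rw [get_congr (show i + 1 = r.length - 1 by omega)]; exact hb.symm
          rw [h1, h2, e1, e2]
        · have hieq : i = r.length - 1 := get_inj hnodup (h2.symm.trans (hxm.trans hb))
          omega
      · exact hxr hxmem
    · have hHadj : H.Adj u x := by
        rw [hH]; exact SimpleGraph.deleteEdges_adj.mpr ⟨hadjux, hmem⟩
      exact hWsup u huW ((hQA x hxQ).trans hHadj.reachable.symm)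
  rcases hloc u hu with huW | huQ <;> rcases hloc x hx with hxW | hxQ
  · -- both in W
    have hLadj : L.Adj u x := ⟨huxadj, hWsup u huW, hWsup x hxW⟩
    have hnot : s(u, x) ∉ W.edges := fun h => huxne (by
      rw [hCedges]; exact List.mem_cons.mpr (Or.inr (List.mem_append.mpr (Or.inl h))))
    exact shortcut W hWlen huW hxW hLadj hnot
  · exact mixed u x huW hxQ huxadj huxne
  · exact mixed x u hxW huQ huxadj.symm (fun h => huxne (Sym2.eq_swap ▸ h))
  · -- both in Q
    have hnotr : s(u, x) ∉ edgesOf r :=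
      not_redge_of_ok hnodup hlen ha hb (hQok u huQ) (hQok x hxQ)
    have hKadj : (predGraph H (fun v => v = a ∨ v = b ∨ v ∉ r)).Adj u x := by
      refine ⟨?_, hQok u huQ, hQok x hxQ⟩
      rw [hH]; exact SimpleGraph.deleteEdges_adj.mpr ⟨huxadj, hnotr⟩
    have hnot : s(u, x) ∉ Q.edges := fun h => huxne (by
      rw [hCedges]; exact List.mem_cons.mpr (Or.inr (List.mem_append.mpr (Or.inr
        (List.mem_cons.mpr (Or.inr h))))))
    exact shortcut Q hQlen huQ hxQ hKadj hnot

lemma pieces {G : SimpleGraph V} {p rr : List V} {S T : V}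
    (hps : IsSimpleSeq G p) (hS : p.head? = some S) (hT : p.getLast? = some T)
    (hc : ContigSub rr p) :
    ∃ a b : V, rr.head? = some a ∧ rr.getLast? = some b ∧
      (S ∈ rr → S = a) ∧ (T ∈ rr → T = b) ∧
      (∃ Pa : G.Walk S a, ∀ v ∈ Pa.support, v = a ∨ v ∉ rr) ∧
      (∃ Pb : G.Walk b T, ∀ v ∈ Pb.support, v = b ∨ v ∉ rr) := by
  classical
  obtain ⟨⟨hpne, hchain⟩, hnodup⟩ := hps
  obtain ⟨i, j, hij, hj, hrr⟩ := hc
  subst hrr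
  have hplen : 0 < p.length := List.length_pos_iff.mpr hpne
  have hrlen : (subseq p i j).length = j + 1 - i := by
    unfold subseq
    rw [List.length_drop, List.length_take, min_eq_left (by omega : j + 1 ≤ p.length)]
  have hrpos : 0 < (subseq p i j).length := by omega
  have hrrne : (subseq p i j) ≠ [] := by
    intro h; rw [h] at hrpos; simp at hrpos
  have hget : ∀ s (hs : s < (subseq p i j).length),
      (subseq p i j).get ⟨s, hs⟩ = p.get ⟨i + s, by omega⟩ := by
    intro s hs
    have hs2 : s < (subseq p i j).length := hs
    rw [hrlen] at hs2
    have hb1 : i + s < j + 1 := by omega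
    have hb2 : i + s < p.length := by omega
    have h1 : p.get ⟨i + s, hb2⟩ = (p.take (j + 1)).get ⟨i + s, by
        rw [List.length_take, min_eq_left (by omega : j + 1 ≤ p.length)]; omega⟩ :=
      by simp
    have h2 : (p.take (j + 1)).get ⟨i + s, by
        rw [List.length_take, min_eq_left (by omega : j + 1 ≤ p.length)]; omega⟩ =
        ((p.take (j + 1)).drop i).get ⟨s, by
          rw [List.length_drop, List.length_take, min_eq_left (by omega : j + 1 ≤ p.length)]; omega⟩ :=
      by simp
    exact (h1.trans h2).symm
  set a := p.get ⟨i, by omega⟩ with hadef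
  set b := p.get ⟨j, by omega⟩ with hbdef
  have hSp : S = p.get ⟨0, hplen⟩ :=
    Option.some.inj (hS.symm.trans (head?_eq_get p hpne))
  have hTp : T = p.get ⟨p.length - 1, by omega⟩ :=
    Option.some.inj (hT.symm.trans (getLast?_eq_get p hpne))
  have hha : (subseq p i j).head? = some a := by
    rw [head?_eq_get _ hrrne, hget 0 (List.length_pos_iff.mpr hrrne)]
    rfl
  have hhb : (subseq p i j).getLast? = some b := by
    rw [getLast?_eq_get _ hrrne, hget ((subseq p i j).length - 1) (by omega)]
    rw [get_congr (show i + ((subseq p i j).length - 1) = j by omega)]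
  have hout : ∀ t (ht : t < p.length), (t < i ∨ j < t) → p.get ⟨t, ht⟩ ∉ (subseq p i j) := by
    intro t ht hrange hmem
    obtain ⟨⟨s, hs⟩, hsget⟩ := List.mem_iff_get.mp hmem
    rw [hget s hs] at hsget
    have h := get_inj hnodup hsget
    have hs2 : s < (subseq p i j).length := hs
    rw [hrlen] at hs2
    omega
  have hSmem : S ∈ (subseq p i j) → S = a := by
    intro hmem
    obtain ⟨⟨s, hs⟩, hsget⟩ := List.mem_iff_get.mp hmem
    rw [hget s hs] at hsget
    rw [hSp] at hsget
    have h := get_inj hnodup hsget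
    rw [hSp, hadef]
    exact get_congr (by omega) _
  have hTmem : T ∈ (subseq p i j) → T = b := by
    intro hmem
    obtain ⟨⟨s, hs⟩, hsget⟩ := List.mem_iff_get.mp hmem
    rw [hget s hs] at hsget
    rw [hTp] at hsget
    have h := get_inj hnodup hsget
    have hs2 : s < (subseq p i j).length := hs
    rw [hrlen] at hs2
    rw [hTp, hbdef]
    exact get_congr (by omega) _
  refine ⟨a, b, hha, hhb, hSmem, hTmem, ?_, ?_⟩
  · -- prefix walk
    set q := p.take (i + 1) with hq
    have hqlen : q.length = i + 1 := by
      rw [hq, List.length_take]; exact min_eq_left (by omega)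
    have hqne : q ≠ [] := by
      intro h; rw [h] at hqlen; simp at hqlen
    have hqget : ∀ t (ht : t < q.length), q.get ⟨t, ht⟩ = p.get ⟨t, by
        rw [hqlen] at ht; omega⟩ := by
      intro t ht
      have ht' : t < i + 1 := by rw [hqlen] at ht; omega
      simp [hq]
    have hqchain : q.Chain' G.Adj := by
      apply List.isChain_iff_getElem.mpr
      intro t ht
      show G.Adj (q.get ⟨t, by omega⟩) (q.get ⟨t + 1, ht⟩)
      rw [hqget t (by omega), hqget (t + 1) (by omega)]
      exact List.isChain_iff_getElem.mp hchain t (by rw [hqlen] at ht; omega)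
    have hqh : q.head? = some S := by
      rw [head?_eq_get q hqne, hqget 0 (List.length_pos_iff.mpr hqne), hSp]
    have hql : q.getLast? = some a := by
      rw [getLast?_eq_get q hqne, hqget (q.length - 1) (by omega)]
      rw [get_congr (show q.length - 1 = i by omega)]
    obtain ⟨Pa, hPa⟩ := exists_walk_of_chain' G q hqchain hqh hql
    refine ⟨Pa, ?_⟩
    intro v hv
    rw [hPa] at hv
    obtain ⟨⟨t, ht⟩, hveq⟩ := List.mem_iff_get.mp hv
    rw [hqget t ht] at hveq
    have ht' : t < i + 1 := by rw [hqlen] at ht; omega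
    by_cases hti : t = i
    · left
      rw [← hveq, hadef]
      exact get_congr (by omega) _
    · right
      rw [← hveq]
      exact hout t (by omega) (Or.inl (by omega))
  · -- suffix walk
    set q := p.drop j with hq
    have hqlen : q.length = p.length - j := by rw [hq, List.length_drop]
    have hqne : q ≠ [] := by
      intro h; rw [h] at hqlen; simp at hqlen; omega
    have hqget : ∀ t (ht : t < q.length), q.get ⟨t, ht⟩ = p.get ⟨j + t, by
        rw [hqlen] at ht; omega⟩ := by
      intro t ht
      simp [hq]
    have hqchain : q.Chain' G.Adj := by
      apply List.isChain_iff_getElem.mpr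
      intro t ht
      show G.Adj (q.get ⟨t, by omega⟩) (q.get ⟨t + 1, ht⟩)
      rw [hqget t (by omega), hqget (t + 1) (by omega)]
      rw [get_congr (show j + (t + 1) = (j + t) + 1 by omega)]
      exact List.isChain_iff_getElem.mp hchain (j + t) (by rw [hqlen] at ht; omega)
    have hqh : q.head? = some b := by
      rw [head?_eq_get q hqne, hqget 0 (List.length_pos_iff.mpr hqne)]
      rfl
    have hql : q.getLast? = some T := by
      rw [getLast?_eq_get q hqne, hqget (q.length - 1) (by omega)]
      rw [get_congr (show j + (q.length - 1) = p.length - 1 by omega), hTp]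
    obtain ⟨Pb, hPb⟩ := exists_walk_of_chain' G q hqchain hqh hql
    refine ⟨Pb, ?_⟩
    intro v hv
    rw [hPb] at hv
    obtain ⟨⟨t, ht⟩, hveq⟩ := List.mem_iff_get.mp hv
    rw [hqget t ht] at hveq
    by_cases ht0 : t = 0
    · left
      rw [← hveq, hbdef]
      exact get_congr (by omega) _
    · right
      rw [← hveq]
      exact hout (j + t) (by rw [hqlen] at ht; omega) (Or.inr (by omega))


/-- For a normal separator path `r`: `r_0` and `T` are not strongly
`r`-connected, `r_{|r|-1}` and `S` are not strongly `r`-connected, `S` and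
`T` are not strongly `r`-connected, and the reverse of `r` is not a normal
separator path. -/
theorem normalSep_not_strongly_connected_endpoints
    {V : Type*} [Fintype V] (G : SimpleGraph V)
    (hconn : G.Connected) (hchordal : Chordal G)
    (S T : V) (hST : S ≠ T) (hnb : ∀ e : Sym2 V, ¬ G.IsBridge e)
    (w : Sym2 V → ℝ) (hw : EdgePos G w)
    (r : List V) (hr : NormalSep G w S T r)
    (a b : V) (ha : r.head? = some a) (hb : r.getLast? = some b) :
    ¬ StronglyConn G r a T ∧ ¬ StronglyConn G r b S ∧
      ¬ StronglyConn G r S T ∧ ¬ NormalSep G w S T r.reverse := by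
  classical
  obtain ⟨hsp, htrav, huseful, hlen3⟩ := hr
  have hlen4 : 4 ≤ r.length := hlen3
  have hrne : r ≠ [] := hsp.1.1.1
  have hnodup : r.Nodup := hsp.1.2
  have ha' : a = r.get ⟨0, by omega⟩ :=
    Option.some.inj (ha.symm.trans (head?_eq_get r hrne))
  have hb' : b = r.get ⟨r.length - 1, by omega⟩ :=
    Option.some.inj (hb.symm.trans (getLast?_eq_get r hrne))
  have hkey := key hchordal hsp hlen4 ha' hb'
  obtain ⟨p, hps, hpS, hpT, hcsub⟩ := htrav
  obtain ⟨a2, b2, ha2, hb2, hSmem, hTmem, ⟨Pa, hPaSup⟩, ⟨Pb, hPbSup⟩⟩ :=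
    pieces hps hpS hpT hcsub
  have haa : a = a2 := Option.some.inj (ha.symm.trans ha2)
  have hbb : b = b2 := Option.some.inj (hb.symm.trans hb2)
  subst haa
  subst hbb
  have hab_ne : a ≠ b := by
    intro h; rw [ha', hb'] at h; have := get_inj hnodup h; omega
  have doneWith : ∀ (P : G.Walk a b), (∀ v ∈ P.support, v = a ∨ v = b ∨ v ∉ r) → False := by
    intro P hsup
    exact hkey (okwalk_reach hnodup hlen4 ha' hb' P hsup)
  have okT : T = b ∨ T ∉ r := by
    by_cases h : T ∈ r
    · exact Or.inl (hTmem h)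
    · exact Or.inr h
  have okS : S = a ∨ S ∉ r := by
    by_cases h : S ∈ r
    · exact Or.inl (hSmem h)
    · exact Or.inr h
  -- convert a strong-connectivity witness list into a walk with controlled support
  have strongWalk : ∀ {u v : V}, StronglyConn G r u v →
      ∃ P : G.Walk u v, ∀ z ∈ P.support, z = u ∨ z = v ∨ z ∉ r := by
    rintro u v ⟨q, ⟨hqne, hqchain⟩, hqh, hql, _, hqint⟩
    obtain ⟨Pq, hPq⟩ := exists_walk_of_chain' G q hqchain hqh hql
    refine ⟨Pq, ?_⟩
    intro z hz
    rw [hPq] at hz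
    obtain ⟨⟨t, ht⟩, hzeq⟩ := List.mem_iff_get.mp hz
    by_cases ht0 : t = 0
    · left
      subst ht0
      rw [← hzeq]
      exact Option.some.inj ((head?_eq_get q hqne).symm.trans hqh)
    · by_cases htl : t = q.length - 1
      · right; left
        rw [← hzeq]
        have := Option.some.inj ((getLast?_eq_get q hqne).symm.trans hql)
        rw [← this]
        subst htl
        rfl
      · right; right
        rw [← hzeq]
        exact hqint t ht (by omega) (by omega)
  have hPaSup' : ∀ z ∈ Pa.support, z = a ∨ z = b ∨ z ∉ r := by
    intro z hz
    rcases hPaSup z hz with h | h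
    · exact Or.inl h
    · exact Or.inr (Or.inr h)
  have hPbSup' : ∀ z ∈ Pb.support, z = a ∨ z = b ∨ z ∉ r := by
    intro z hz
    rcases hPbSup z hz with h | h
    · exact Or.inr (Or.inl h)
    · exact Or.inr (Or.inr h)
  have okzS : S = a ∨ S = b ∨ S ∉ r := by
    rcases okS with h | h
    · exact Or.inl h
    · exact Or.inr (Or.inr h)
  have okzT : T = a ∨ T = b ∨ T ∉ r := by
    rcases okT with h | h
    · exact Or.inr (Or.inl h)
    · exact Or.inr (Or.inr h)
  refine ⟨?_, ?_, ?_, ?_⟩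
  · -- ¬ StronglyConn G r a T
    intro hsc
    obtain ⟨Pq, hPqSup⟩ := strongWalk hsc
    refine doneWith (Pq.append Pb.reverse) ?_
    intro v hv
    rw [Walk.support_append] at hv
    rcases List.mem_append.mp hv with hv | hv
    · rcases hPqSup v hv with h | h | h
      · exact Or.inl h
      · subst h; exact okzT
      · exact Or.inr (Or.inr h)
    · have hv2 : v ∈ Pb.support := by
        rw [Walk.support_reverse] at hv
        exact List.mem_reverse.mp (List.mem_of_mem_tail hv)
      exact hPbSup' v hv2
  · -- ¬ StronglyConn G r b S
    intro hsc
    obtain ⟨Pq, hPqSup⟩ := strongWalk hsc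
    refine doneWith ((Pq.append Pa).reverse) ?_
    intro v hv
    rw [Walk.support_reverse, List.mem_reverse, Walk.support_append] at hv
    rcases List.mem_append.mp hv with hv | hv
    · rcases hPqSup v hv with h | h | h
      · exact Or.inr (Or.inl h)
      · subst h; exact okzS
      · exact Or.inr (Or.inr h)
    · exact hPaSup' v (List.mem_of_mem_tail hv)
  · -- ¬ StronglyConn G r S T
    intro hsc
    obtain ⟨Pq, hPqSup⟩ := strongWalk hsc
    refine doneWith (Pa.reverse.append (Pq.append Pb.reverse)) ?_
    intro v hv
    rw [Walk.support_append] at hv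
    rcases List.mem_append.mp hv with hv | hv
    · have hv2 : v ∈ Pa.support := by
        rw [Walk.support_reverse] at hv
        exact List.mem_reverse.mp hv
      exact hPaSup' v hv2
    · have hv2 := List.mem_of_mem_tail hv
      rw [Walk.support_append] at hv2
      rcases List.mem_append.mp hv2 with hv3 | hv3
      · rcases hPqSup v hv3 with h | h | h
        · subst h; exact okzS
        · subst h; exact okzT
        · exact Or.inr (Or.inr h)
      · have hv4 : v ∈ Pb.support := by
          rw [Walk.support_reverse] at hv3
          exact List.mem_reverse.mp (List.mem_of_mem_tail hv3)
        exact hPbSup' v hv4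
  · -- ¬ NormalSep G w S T r.reverse
    rintro ⟨hsp', htrav', husf', hlen'⟩
    obtain ⟨p', hps', hpS', hpT', hcsub'⟩ := htrav'
    obtain ⟨a3, b3, ha3, hb3, hSmem', hTmem', ⟨Pa', hPaSup3⟩, _⟩ :=
      pieces hps' hpS' hpT' hcsub'
    have ha3b : a3 = b := by
      have h1 : r.reverse.head? = some a3 := ha3
      rw [List.head?_reverse] at h1
      exact Option.some.inj (h1.symm.trans hb)
    subst ha3b
    have hSr : S ∉ r := by
      intro hS
      have h1 := hSmem hS
      have h2 := hSmem' (List.mem_reverse.mpr hS)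
      exact hab_ne (h1.symm.trans h2)
    refine doneWith (Pa.reverse.append Pa') ?_
    intro v hv
    rw [Walk.support_append] at hv
    rcases List.mem_append.mp hv with hv | hv
    · have hv2 : v ∈ Pa.support := by
        rw [Walk.support_reverse] at hv
        exact List.mem_reverse.mp hv
      exact hPaSup' v hv2
    · have hv2 := List.mem_of_mem_tail hv
      rcases hPaSup3 v hv2 with h | h
      · exact Or.inr (Or.inl h)
      · exact Or.inr (Or.inr (fun hm => h (List.mem_reverse.mpr hm)))


end NSP
end

section
/- If r and q are useful separator paths, then for every index i with 0 ≤ i < |r|−2, the edge between r_i and r_{i+2} (which exists because r is a separator path) is not an edge of q. -/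
open SimpleGraph

namespace NSP

variable {V : Type*}

/- ===================== Auxiliary lemmas for the proof ===================== -/

section AuxProof

open SimpleGraph Walk

private lemma get_idx_congr (q : List V) {i j : ℕ} {hi : i < q.length} (h : i = j) :
    q.get ⟨i, hi⟩ = q.get ⟨j, h ▸ hi⟩ := by subst h; rfl

private lemma getD_eq_get {p : List V} (d : V) {i : ℕ} (h : i < p.length) :
    p.getD i d = p.get ⟨i, h⟩ := by
  simp [List.getD_eq_getElem?_getD, List.getElem?_eq_getElem h, List.get_eq_getElem]

private lemma adj_get {G : SimpleGraph V} {p : List V} (hp : IsPathSeq G p)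
    {i : ℕ} (hi : i + 1 < p.length) :
    G.Adj (p.get ⟨i, by omega⟩) (p.get ⟨i + 1, hi⟩) :=
  List.isChain_iff_getElem.mp hp.2 i (by omega)

private lemma reach_of_mem_support_s15 {H : SimpleGraph V} {s t v : V} (p : H.Walk s t)
    (hv : v ∈ p.support) : H.Reachable s v := by classical exact ⟨p.takeUntil v hv⟩

private lemma reach_decomp {K : SimpleGraph V} {a b v w : V} (p : K.Walk v w) :
    (K.deleteEdges {s(a, b)}).Reachable v w ∨
      ((K.deleteEdges {s(a, b)}).Reachable v a ∧ (K.deleteEdges {s(a, b)}).Reachable b w) ∨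
      ((K.deleteEdges {s(a, b)}).Reachable v b ∧ (K.deleteEdges {s(a, b)}).Reachable a w) := by
  classical
  induction p with
  | nil => exact Or.inl (Reachable.refl _)
  | @cons x y z hxy p ih =>
    by_cases he : s(x, y) = s(a, b)
    · rw [Sym2.eq_iff] at he
      rcases he with ⟨rfl, rfl⟩ | ⟨rfl, rfl⟩
      · rcases ih with hr | ⟨h1, h2⟩ | ⟨h1, h2⟩
        · exact Or.inr (Or.inl ⟨Reachable.refl _, hr⟩)
        · exact Or.inl (h1.symm.trans h2)
        · exact Or.inl h2
      · rcases ih with hr | ⟨h1, h2⟩ | ⟨h1, h2⟩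
        · exact Or.inr (Or.inr ⟨Reachable.refl _, hr⟩)
        · exact Or.inl h2
        · exact Or.inl (h1.symm.trans h2)
    · have hadj : (K.deleteEdges {s(a, b)}).Adj x y :=
        SimpleGraph.deleteEdges_adj.mpr ⟨hxy, by simpa using he⟩
      rcases ih with hr | ⟨h1, h2⟩ | ⟨h1, h2⟩
      · exact Or.inl (hadj.reachable.trans hr)
      · exact Or.inr (Or.inl ⟨hadj.reachable.trans h1, h2⟩)
      · exact Or.inr (Or.inr ⟨hadj.reachable.trans h1, h2⟩)

private lemma two_comp {K : SimpleGraph V} (hK : K.Connected) (a b : V)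
    (hd : ¬ (K.deleteEdges {s(a, b)}).Connected) :
    (∀ v, (K.deleteEdges {s(a, b)}).Reachable v a ∨ (K.deleteEdges {s(a, b)}).Reachable v b) ∧
      ¬ (K.deleteEdges {s(a, b)}).Reachable a b := by
  have hsplit : ∀ v, (K.deleteEdges {s(a, b)}).Reachable v a ∨
      (K.deleteEdges {s(a, b)}).Reachable v b := by
    intro v
    obtain ⟨p⟩ := hK.preconnected v a
    rcases reach_decomp p with hr | ⟨h1, _⟩ | ⟨h1, _⟩
    · exact Or.inl hr
    · exact Or.inl h1
    · exact Or.inr h1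
  refine ⟨hsplit, fun hab => hd ?_⟩
  have hpre : (K.deleteEdges {s(a, b)}).Preconnected := by
    intro u v
    rcases hsplit u with h1 | h1 <;> rcases hsplit v with h2 | h2
    · exact h1.trans h2.symm
    · exact h1.trans (hab.trans h2.symm)
    · exact h1.trans (hab.symm.trans h2.symm)
    · exact h1.trans h2.symm
  haveI := hK.nonempty
  exact Connected.mk hpre

private lemma reach_of_not_reach {H : SimpleGraph V} {c d x u v : V}
    (hsplit : ∀ z, H.Reachable z c ∨ H.Reachable z d)
    (hu : ¬ H.Reachable u x) (hv : ¬ H.Reachable v x) : H.Reachable u v := by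
  rcases hsplit u with h1 | h1 <;> rcases hsplit v with h2 | h2 <;> rcases hsplit x with h3 | h3 <;>
    first
      | exact h1.trans h2.symm
      | exact absurd (h1.trans h3.symm) hu
      | exact absurd (h2.trans h3.symm) hv

private lemma mem_edgesOf_getD {p : List V} (d : V) {e : Sym2 V} :
    e ∈ edgesOf p ↔ ∃ i : ℕ, i + 1 < p.length ∧ e = s(p.getD i d, p.getD (i + 1) d) := by
  constructor
  · rintro ⟨i, hi, rfl⟩
    exact ⟨i, hi, by rw [getD_eq_get d (by omega), getD_eq_get d hi]⟩
  · rintro ⟨i, hi, rfl⟩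
    exact ⟨i, hi, by rw [getD_eq_get d (by omega), getD_eq_get d hi]⟩

private lemma getD_take (q : List V) (d : V) {m i : ℕ} (him : i < m) :
    (q.take m).getD i d = q.getD i d := by
  by_cases hi : i < q.length
  · have h2 : i < (q.take m).length := by simp [List.length_take]; omega
    rw [getD_eq_get d h2, getD_eq_get d hi]
    simp [List.get_eq_getElem, List.getElem_take]
  · have h2 : (q.take m).length ≤ i := by simp [List.length_take]; omega
    rw [List.getD_eq_getElem?_getD, List.getD_eq_getElem?_getD,
      List.getElem?_eq_none h2, List.getElem?_eq_none (by omega)]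

private lemma getD_drop1 (q : List V) (d : V) (i : ℕ) :
    (q.drop 1).getD i d = q.getD (i + 1) d := by
  by_cases hi : i + 1 < q.length
  · have h2 : i < (q.drop 1).length := by simp [List.length_drop]; omega
    rw [getD_eq_get d h2, getD_eq_get d hi]
    have : 1 + i = i + 1 := by omega
    simp [List.get_eq_getElem, List.getElem_drop, this]
  · have h2 : (q.drop 1).length ≤ i := by simp [List.length_drop]; omega
    rw [List.getD_eq_getElem?_getD, List.getD_eq_getElem?_getD,
      List.getElem?_eq_none h2, List.getElem?_eq_none (by omega)]

private lemma edge_mem_of_length_one {G : SimpleGraph V} {a b : V} (p : G.Walk a b)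
    (hp : p.length = 1) : s(a, b) ∈ p.edges := by
  cases p with
  | nil => simp at hp
  | cons h p' =>
    cases p' with
    | nil => simp
    | cons h' p'' => simp [Walk.length_cons] at hp

private lemma shortcut_s15 {G : SimpleGraph V} {x y : V} {A : G.Walk x y} (hA : A.IsPath)
    {u w : V} (hu : u ∈ A.support) (hw : w ∈ A.support) (hadj : G.Adj u w)
    (hne : s(u, w) ∉ A.edges) :
    ∃ A' : G.Walk x y, A'.IsPath ∧ A'.length < A.length ∧
      ∀ v ∈ A'.support, v ∈ A.support := by
  classical
  have key : ∃ A' : G.Walk x y, A'.length < A.length ∧ ∀ v ∈ A'.support, v ∈ A.support := by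
    by_cases hcase : u ∈ (A.takeUntil w hw).support
    · -- u occurs before w
      set T := A.takeUntil w hw with hT
      set D := A.dropUntil w hw with hD
      set T' := T.takeUntil u hcase with hT'
      set M := T.dropUntil u hcase with hM
      have hTD : T.length + D.length = A.length := by
        rw [← Walk.length_append, Walk.take_spec]
      have hTM : T'.length + M.length = T.length := by
        rw [← Walk.length_append, Walk.take_spec]
      have hM2 : 2 ≤ M.length := by
        rcases Nat.lt_or_ge M.length 2 with hlt | hge
        · interval_cases hml : M.length
          · exact absurd (Walk.eq_of_length_eq_zero hml) hadj.ne
          · exact absurd (Walk.edges_takeUntil_subset A hw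
              (Walk.edges_dropUntil_subset T hcase (edge_mem_of_length_one M hml))) hne
        · exact hge
      refine ⟨T'.append (Walk.cons hadj D), ?_, ?_⟩
      · rw [Walk.length_append, Walk.length_cons]; omega
      · intro v hv
        rw [Walk.support_append, Walk.support_cons, List.tail_cons] at hv
        rcases List.mem_append.mp hv with hv | hv
        · exact Walk.support_takeUntil_subset A hw (Walk.support_takeUntil_subset T hcase hv)
        · exact Walk.support_dropUntil_subset A hw hv
    · -- w occurs before u
      have hu' : u ∈ (A.dropUntil w hw).support := by
        have := Walk.take_spec A hw
        have hmem : u ∈ ((A.takeUntil w hw).append (A.dropUntil w hw)).support := by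
          rw [this]; exact hu
        rw [Walk.mem_support_append_iff] at hmem
        tauto
      set D := A.dropUntil w hw with hD
      set T := A.takeUntil w hw with hT
      set M := D.takeUntil u hu' with hM
      set D' := D.dropUntil u hu' with hD'
      have hTD : T.length + D.length = A.length := by
        rw [← Walk.length_append, Walk.take_spec]
      have hMD : M.length + D'.length = D.length := by
        rw [← Walk.length_append, Walk.take_spec]
      have hM2 : 2 ≤ M.length := by
        rcases Nat.lt_or_ge M.length 2 with hlt | hge
        · interval_cases hml : M.length
          · exact absurd (Walk.eq_of_length_eq_zero hml) hadj.ne.symm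
          · refine absurd (Walk.edges_dropUntil_subset A hw
              (Walk.edges_takeUntil_subset D hu' (edge_mem_of_length_one M hml))) ?_
            rwa [Sym2.eq_swap] at hne
        · exact hge
      refine ⟨T.append (Walk.cons hadj.symm D'), ?_, ?_⟩
      · rw [Walk.length_append, Walk.length_cons]; omega
      · intro v hv
        rw [Walk.support_append, Walk.support_cons, List.tail_cons] at hv
        rcases List.mem_append.mp hv with hv | hv
        · exact Walk.support_takeUntil_subset A hw hv
        · exact Walk.support_dropUntil_subset A hw (Walk.support_dropUntil_subset D hu' hv)
  obtain ⟨A', hlen, hsub⟩ := key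
  exact ⟨A'.bypass, Walk.bypass_isPath A', lt_of_le_of_lt (Walk.length_bypass_le A') hlen,
    fun v hv => hsub v (Walk.support_bypass_subset A' hv)⟩

private lemma sep_alternate {G : SimpleGraph V} (hconn : G.Connected) (hchordal : Chordal G)
    {q : List V} (hq : SeparatorPath G q) {a : ℕ} (ha : a + 1 < q.length) :
    ¬ (G.deleteEdges (edgesOf q)).Reachable (q.get ⟨a, by omega⟩) (q.get ⟨a + 1, ha⟩) := by
  classical
  intro hbad0
  set H := G.deleteEdges (edgesOf q) with hH
  set n := q.length with hn
  have hn2 : 2 ≤ n := by omega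
  have h0n : 0 < n := by omega
  set v0 : V := q.get ⟨0, h0n⟩ with hv0
  set f : ℕ → V := fun k => q.getD k v0 with hf
  have hfget : ∀ {k : ℕ} (hk : k < n), f k = q.get ⟨k, hk⟩ := by
    intro k hk; exact getD_eq_get v0 hk
  have hnodup := hq.1.2
  have hInj : ∀ {k l : ℕ}, k < n → l < n → f k = f l → k = l := by
    intro k l hk hl hkl
    rw [hfget hk, hfget hl] at hkl
    have := (List.Nodup.get_inj_iff hnodup (i := ⟨k, hk⟩) (j := ⟨l, hl⟩)).mp hkl
    exact congrArg Fin.val this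
  have hAdj : ∀ {k : ℕ}, k + 1 < n → G.Adj (f k) (f (k + 1)) := by
    intro k hk
    rw [hfget (by omega : k < n), hfget hk]
    exact adj_get hq.1.1 hk
  have hEdgeMem : ∀ {e : Sym2 V}, e ∈ edgesOf q → ∃ k, k + 1 < n ∧ e = s(f k, f (k + 1)) := by
    intro e he
    obtain ⟨i, hi, rfl⟩ := (mem_edgesOf_getD (p := q) v0).mp he
    exact ⟨i, hi, rfl⟩
  have hEdge : ∀ {k : ℕ}, k + 1 < n → s(f k, f (k + 1)) ∈ edgesOf q := by
    intro k hk
    exact (mem_edgesOf_getD (p := q) v0).mpr ⟨k, hk, rfl⟩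
  have hHadj : ∀ {u v : V}, G.Adj u v → s(u, v) ∉ edgesOf q → H.Adj u v := by
    intro u v h1 h2
    rw [hH]; exact SimpleGraph.deleteEdges_adj.mpr ⟨h1, h2⟩
  have hbad : H.Reachable (f a) (f (a + 1)) := by
    rw [hfget (by omega : a < n), hfget ha]; exact hbad0
  -- minimality consequences
  have hmin := hq.2.2
  have hprefix : (G.deleteEdges (edgesOf (q.take (n - 1)))).Connected := by
    have hc : ContigSub (q.take (n - 1)) q := by
      refine ⟨0, n - 2, by omega, by omega, ?_⟩
      rw [subseq, List.drop_zero, show n - 2 + 1 = n - 1 from by omega]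
    have hne : q.take (n - 1) ≠ q := by
      intro hEq
      have := congrArg List.length hEq
      rw [List.length_take] at this
      omega
    have := hmin _ hc hne
    rw [SeparatingPath, Separating] at this
    exact not_not.mp this
  have hsuffix : (G.deleteEdges (edgesOf (q.drop 1))).Connected := by
    have hc : ContigSub (q.drop 1) q := by
      refine ⟨1, n - 1, by omega, by omega, ?_⟩
      rw [subseq, show n - 1 + 1 = n from by omega, hn, List.take_length]
    have hne : q.drop 1 ≠ q := by
      intro hEq
      have := congrArg List.length hEq
      rw [List.length_drop] at this
      omega
    have := hmin _ hc hne
    rw [SeparatingPath, Separating] at this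
    exact not_not.mp this
  -- edge set decompositions
  have hEdgesTake : edgesOf q = edgesOf (q.take (n - 1)) ∪ {s(f (n - 2), f (n - 1))} := by
    ext e
    rw [Set.mem_union, Set.mem_singleton_iff, mem_edgesOf_getD (p := q) v0,
      mem_edgesOf_getD (p := q.take (n - 1)) v0]
    constructor
    · rintro ⟨i, hi, rfl⟩
      by_cases hc : i + 1 < n - 1
      · left
        refine ⟨i, by rw [List.length_take]; omega, ?_⟩
        rw [getD_take q v0 (by omega), getD_take q v0 (by omega)]
      · right
        have hieq : i = n - 2 := by omega
        subst hieq
        rw [show n - 2 + 1 = n - 1 from by omega]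
    · rintro (⟨i, hi, rfl⟩ | rfl)
      · rw [List.length_take] at hi
        refine ⟨i, by omega, ?_⟩
        rw [getD_take q v0 (by omega), getD_take q v0 (by omega)]
      · exact ⟨n - 2, by omega, by rw [show n - 2 + 1 = n - 1 from by omega]⟩
  have hEdgesDrop : edgesOf q = edgesOf (q.drop 1) ∪ {s(f 0, f 1)} := by
    ext e
    rw [Set.mem_union, Set.mem_singleton_iff, mem_edgesOf_getD (p := q) v0,
      mem_edgesOf_getD (p := q.drop 1) v0]
    constructor
    · rintro ⟨i, hi, rfl⟩
      rcases Nat.eq_zero_or_pos i with rfl | hip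
      · right; rfl
      · left
        refine ⟨i - 1, by rw [List.length_drop]; omega, ?_⟩
        rw [getD_drop1, getD_drop1, show i - 1 + 1 = i from by omega]
    · rintro (⟨i, hi, rfl⟩ | rfl)
      · rw [List.length_drop] at hi
        refine ⟨i + 1, by omega, ?_⟩
        rw [getD_drop1, getD_drop1]
      · exact ⟨0, by omega, rfl⟩
  -- two components
  have hKH : (G.deleteEdges (edgesOf (q.take (n - 1)))).deleteEdges {s(f (n - 2), f (n - 1))}
      = H := by
    rw [SimpleGraph.deleteEdges_deleteEdges, hH, ← hEdgesTake]
  have hKH' : (G.deleteEdges (edgesOf (q.drop 1))).deleteEdges {s(f 0, f 1)} = H := by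
    rw [SimpleGraph.deleteEdges_deleteEdges, hH, ← hEdgesDrop]
  have h2c := two_comp hprefix (f (n - 2)) (f (n - 1)) (by rw [hKH]; exact hq.2.1)
  rw [hKH] at h2c
  obtain ⟨hsplit, hlastne⟩ := h2c
  have h2c' := two_comp hsuffix (f 0) (f 1) (by rw [hKH']; exact hq.2.1)
  rw [hKH'] at h2c'
  have h01 : ¬ H.Reachable (f 0) (f 1) := h2c'.2
  -- position of the bad edge
  have ha1 : 1 ≤ a := by
    rcases Nat.eq_zero_or_pos a with rfl | h
    · exact absurd hbad h01
    · exact h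
  have ha2 : a + 1 ≤ n - 2 := by
    by_contra hcon
    apply hlastne
    have h2 : f a = f (n - 2) := by rw [show a = n - 2 from by omega]
    have h3 : f (a + 1) = f (n - 1) := by rw [show a + 1 = n - 1 from by omega]
    rw [← h2, ← h3]
    exact hbad
  -- the maximal run around the bad edge
  set P : ℕ → Prop := fun j => ¬ H.Reachable (f j) (f (j + 1)) with hP
  set j1 := Nat.findGreatest P (a - 1) with hj1def
  have hj1P : P j1 := Nat.findGreatest_spec (Nat.zero_le _) h01
  have hj1le : j1 ≤ a - 1 := Nat.findGreatest_le _
  have hPn2 : P (n - 2) := by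
    have hnn : n - 2 + 1 = n - 1 := by omega
    simp only [hP, hnn]
    exact hlastne
  have hex : ∃ m : ℕ, P (a + 1 + m) :=
    ⟨n - 2 - (a + 1), by rw [show a + 1 + (n - 2 - (a + 1)) = n - 2 from by omega]; exact hPn2⟩
  set j2 := a + 1 + Nat.find hex with hj2def
  have hj2P : P j2 := Nat.find_spec hex
  have hj2min : ∀ k, a + 1 ≤ k → k < j2 → ¬ P k := by
    intro k h1 h2
    have := Nat.find_min hex (m := k - (a + 1)) (by omega)
    rwa [show a + 1 + (k - (a + 1)) = k from by omega] at this
  have hj2le : j2 ≤ n - 2 := by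
    by_contra hcon
    exact hj2min (n - 2) (by omega) (by omega) hPn2
  have hj1a : j1 < a := by omega
  have hj12 : j1 + 2 ≤ j2 := by omega
  have hj2n : j2 + 1 < n := by omega
  have hstep : ∀ k, j1 + 1 ≤ k → k < j2 → H.Reachable (f k) (f (k + 1)) := by
    intro k h1 h2
    by_contra hPk
    rcases lt_trichotomy k a with hk | hk | hk
    · exact Nat.findGreatest_is_greatest (show j1 < k by omega) (by omega) hPk
    · subst hk; exact hPk hbad
    · exact hj2min k (by omega) h2 hPk
  have hrun : ∀ k, j1 + 1 ≤ k → k ≤ j2 → H.Reachable (f (j1 + 1)) (f k) := by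
    intro k
    induction k with
    | zero => intro h1 _; omega
    | succ m ih =>
      intro h1 h2
      rcases Nat.lt_or_ge (j1 + 1) (m + 1) with hlt | hge
      · exact (ih (by omega) (by omega)).trans (hstep m (by omega) (by omega))
      · rw [show j1 + 1 = m + 1 from by omega]
  have hnr : ¬ H.Reachable (f (j2 + 1)) (f (j1 + 1)) := by
    intro hcon
    exact hj2P ((hrun j2 (by omega) le_rfl).symm.trans hcon.symm)
  have hB0 : H.Reachable (f (j2 + 1)) (f j1) :=
    reach_of_not_reach hsplit hnr hj1P
  -- the reachability class of the run
  set R : V → Prop := fun v => H.Reachable (f (j1 + 1)) v with hR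
  have hRf : ∀ k, j1 + 1 ≤ k → k ≤ j2 → R (f k) := fun k h1 h2 => hrun k h1 h2
  have hnRj1 : ¬ R (f j1) := fun hr => hj1P hr.symm
  have hnRj2' : ¬ R (f (j2 + 1)) := fun hr => hnr hr.symm
  -- initial run walk
  have hA0 : ∃ A : G.Walk (f (j1 + 1)) (f j2), A.IsPath ∧
      ∀ v ∈ A.support, ∃ k, j1 + 1 ≤ k ∧ k ≤ j2 ∧ f k = v := by
    have hgen : ∀ m : ℕ, j1 + 1 + m ≤ j2 → ∃ A : G.Walk (f (j1 + 1)) (f (j1 + 1 + m)),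
        ∀ v ∈ A.support, ∃ k, j1 + 1 ≤ k ∧ k ≤ j1 + 1 + m ∧ f k = v := by
      intro m
      induction m with
      | zero =>
        intro _
        exact ⟨Walk.nil, by
          intro v hv
          rw [Walk.support_nil, List.mem_singleton] at hv
          exact ⟨j1 + 1, le_rfl, le_rfl, hv.symm⟩⟩
      | succ m ih =>
        intro hm
        obtain ⟨A, hAs⟩ := ih (by omega)
        have hadj : G.Adj (f (j1 + 1 + m)) (f (j1 + 1 + m + 1)) := hAdj (by omega)
        refine ⟨(A.concat hadj).copy rfl (by rw [show j1 + 1 + (m + 1) = j1 + 1 + m + 1 from rfl]),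
          ?_⟩
        intro v hv
        rw [Walk.support_copy, Walk.support_concat] at hv
        rcases List.mem_append.mp hv with hv | hv
        · obtain ⟨k, h1, h2, h3⟩ := hAs v hv
          exact ⟨k, h1, by omega, h3⟩
        · rw [List.mem_singleton] at hv
          exact ⟨j1 + 1 + m + 1, by omega, by omega, hv.symm⟩
    obtain ⟨A, hAs⟩ := hgen (j2 - (j1 + 1)) (by omega)
    have hcopy : f (j1 + 1 + (j2 - (j1 + 1))) = f j2 := by
      rw [show j1 + 1 + (j2 - (j1 + 1)) = j2 from by omega]
    refine ⟨(A.copy rfl hcopy).bypass, Walk.bypass_isPath _, ?_⟩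
    intro v hv
    have hv2 := Walk.support_bypass_subset _ hv
    rw [Walk.support_copy] at hv2
    obtain ⟨k, h1, h2, h3⟩ := hAs v hv2
    exact ⟨k, h1, by omega, h3⟩
  obtain ⟨A0, hA0p, hA0s⟩ := hA0
  -- initial B walk
  obtain ⟨pB⟩ := hB0
  have hsubE : ∀ e ∈ pB.edges, e ∈ G.edgeSet := fun e he =>
    SimpleGraph.edgeSet_mono (hH ▸ SimpleGraph.deleteEdges_le (edgesOf q) : H ≤ G)
      (pB.edges_subset_edgeSet he)
  set pB' := (pB.transfer G hsubE).bypass with hpB'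
  have hB0p : pB'.IsPath := Walk.bypass_isPath _
  have hB0s : ∀ v ∈ pB'.support, ¬ R v := by
    intro v hv hRv
    have hv' : v ∈ pB.support := by
      have h1 := Walk.support_bypass_subset _ hv
      rwa [Walk.support_transfer] at h1
    exact hnr ((reach_of_mem_support_s15 pB hv').trans hRv.symm)
  -- the main descent
  have key : ∀ N : ℕ, ∀ (A : G.Walk (f (j1 + 1)) (f j2)) (B : G.Walk (f (j2 + 1)) (f j1)),
      A.IsPath → B.IsPath →
      (∀ v ∈ A.support, ∃ k, j1 + 1 ≤ k ∧ k ≤ j2 ∧ f k = v) →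
      (∀ v ∈ B.support, ¬ R v) →
      A.length + B.length ≤ N → False := by
    intro N
    induction N with
    | zero =>
      intro A B _ _ _ _ hlen
      have h0 : f (j1 + 1) = f j2 := Walk.eq_of_length_eq_zero (p := A) (by omega)
      have := hInj (k := j1 + 1) (l := j2) (by omega) (by omega) h0
      omega
    | succ N ih =>
      intro A B hAp hBp hAs hBs hlen
      have hRA : ∀ v ∈ A.support, R v := by
        intro v hv
        obtain ⟨k, h1, h2, rfl⟩ := hAs v hv
        exact hRf k h1 h2
      have hAlen : 1 ≤ A.length := by
        by_contra hcon
        have h0 : f (j1 + 1) = f j2 := Walk.eq_of_length_eq_zero (p := A) (by omega)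
        have := hInj (k := j1 + 1) (l := j2) (by omega) (by omega) h0
        omega
      have hBlen : 1 ≤ B.length := by
        by_contra hcon
        have h0 : f (j2 + 1) = f j1 := Walk.eq_of_length_eq_zero (p := B) (by omega)
        have := hInj (k := j2 + 1) (l := j1) (by omega) (by omega) h0
        omega
      have hadj1 : G.Adj (f j1) (f (j1 + 1)) := hAdj (by omega)
      have hadj2 : G.Adj (f j2) (f (j2 + 1)) := hAdj (by omega)
      set c : G.Walk (f j1) (f j1) := Walk.cons hadj1 (A.append (Walk.cons hadj2 B)) with hc
      have hcsup : c.support = f j1 :: (A.support ++ B.support) := by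
        rw [hc, Walk.support_cons, Walk.support_append, Walk.support_cons, List.tail_cons]
      have hcedges : c.edges
          = s(f j1, f (j1 + 1)) :: (A.edges ++ s(f j2, f (j2 + 1)) :: B.edges) := by
        rw [hc, Walk.edges_cons, Walk.edges_append, Walk.edges_cons]
      have hdisj : ∀ v ∈ A.support, v ∉ B.support := fun v hv hv2 => hBs v hv2 (hRA v hv)
      -- edge classification
      have he1A : s(f j1, f (j1 + 1)) ∉ A.edges := by
        intro hmem
        exact hnRj1 (hRA _ (Walk.fst_mem_support_of_mem_edges A hmem))
      have he1B : s(f j1, f (j1 + 1)) ∉ B.edges := by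
        intro hmem
        exact hBs _ (Walk.snd_mem_support_of_mem_edges B hmem) (Reachable.refl _)
      have he2A : s(f j2, f (j2 + 1)) ∉ A.edges := by
        intro hmem
        exact hnRj2' (hRA _ (Walk.snd_mem_support_of_mem_edges A hmem))
      have he2B : s(f j2, f (j2 + 1)) ∉ B.edges := by
        intro hmem
        exact hBs _ (Walk.fst_mem_support_of_mem_edges B hmem) (hRf j2 (by omega) le_rfl)
      have he12 : s(f j1, f (j1 + 1)) ≠ s(f j2, f (j2 + 1)) := by
        intro hmem
        rw [Sym2.eq_iff] at hmem
        rcases hmem with ⟨h1, h2⟩ | ⟨h1, h2⟩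
        · have := hInj (k := j1) (l := j2) (by omega) (by omega) h1; omega
        · have := hInj (k := j1 + 1) (l := j2) (by omega) (by omega) h2; omega
      have hABedges : ∀ e ∈ A.edges, e ∉ B.edges := by
        intro e heA heB
        induction e with
        | h x' y' =>
          exact hBs x' (Walk.fst_mem_support_of_mem_edges B heB)
            (hRA x' (Walk.fst_mem_support_of_mem_edges A heA))
      have hcyc : c.IsCycle := by
        rw [Walk.isCycle_def]
        refine ⟨?_, by simp [hc], ?_⟩
        · rw [Walk.isTrail_def, hcedges]
          refine List.nodup_cons.mpr ⟨?_, ?_⟩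
          · intro hcon
            rcases List.mem_append.mp hcon with hcon | hcon
            · exact he1A hcon
            · rcases List.mem_cons.mp hcon with hcon | hcon
              · exact he12 hcon
              · exact he1B hcon
          · refine List.nodup_append'.mpr ⟨hAp.isTrail.edges_nodup,
              List.nodup_cons.mpr ⟨he2B, hBp.isTrail.edges_nodup⟩, ?_⟩
            intro e heA hecon
            rcases List.mem_cons.mp hecon with hcon | hcon
            · exact he2A (hcon ▸ heA)
            · exact hABedges e heA hcon
        · rw [hcsup, List.tail_cons]
          exact List.Nodup.append hAp.support_nodup hBp.support_nodup hdisj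
      have hclen : 4 ≤ c.length := by
        rw [hc, Walk.length_cons, Walk.length_append, Walk.length_cons]
        omega
      obtain ⟨u', w', hu'sup, hw'sup, hadj', hne'⟩ := hchordal c hcyc hclen
      have hmemAB : ∀ z ∈ c.support, z ∈ A.support ∨ z ∈ B.support := by
        intro z hz
        rw [hcsup] at hz
        rcases List.mem_cons.mp hz with rfl | hz
        · exact Or.inr (Walk.end_mem_support B)
        · exact List.mem_append.mp hz
      -- the mixed case as a reusable fact
      have mixed : ∀ u1 w1 : V, u1 ∈ A.support → w1 ∈ B.support → G.Adj u1 w1 →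
          s(u1, w1) ∉ c.edges → False := by
        intro u1 w1 huA hwB hadj1' hne1
        obtain ⟨k, hk1, hk2, hkf⟩ := hAs u1 huA
        have hkn : k < n := by omega
        have hnRw : ¬ R w1 := hBs w1 hwB
        have hmemq : s(u1, w1) ∈ edgesOf q := by
          by_contra hnq
          exact hnRw ((hRA u1 huA).trans (hHadj hadj1' hnq).reachable)
        obtain ⟨m, hm, hme⟩ := hEdgeMem hmemq
        rw [Sym2.eq_iff] at hme
        rcases hme with ⟨h1, h2⟩ | ⟨h1, h2⟩
        · -- u1 = f m, w1 = f (m + 1)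
          subst h1
          subst h2
          have hkm : k = m := hInj (l := m) hkn (by omega) hkf
          rcases Nat.lt_or_ge m j2 with hlt | hge
          · exact hnRw (hRf (m + 1) (by omega) (by omega))
          · apply hne1
            rw [hcedges, show m = j2 from by omega]
            simp
        · -- u1 = f (m + 1), w1 = f m
          subst h1
          subst h2
          have hkm : k = m + 1 := hInj (l := m + 1) hkn (by omega) hkf
          rcases Nat.lt_or_ge (j1 + 1) k with hlt | hge
          · exact hnRw (hRf m (by omega) (by omega))
          · apply hne1
            rw [hcedges, show m = j1 from by omega, Sym2.eq_swap]
            simp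
      rcases hmemAB u' hu'sup with huA | huB <;> rcases hmemAB w' hw'sup with hwA | hwB
      · -- both in A
        have hneA : s(u', w') ∉ A.edges := by
          intro hmem
          exact hne' (by rw [hcedges]; simp [hmem])
        obtain ⟨A', hA'p, hA'len, hA'sub⟩ := shortcut_s15 hAp huA hwA hadj' hneA
        exact ih A' B hA'p hBp (fun v hv => hAs v (hA'sub v hv)) hBs (by omega)
      · exact mixed u' w' huA hwB hadj' hne'
      · refine mixed w' u' hwA huB hadj'.symm ?_
        rw [Sym2.eq_swap]
        exact hne'
      · -- both in B
        have hneB : s(u', w') ∉ B.edges := by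
          intro hmem
          exact hne' (by rw [hcedges]; simp [hmem])
        obtain ⟨B', hB'p, hB'len, hB'sub⟩ := shortcut_s15 hBp huB hwB hadj' hneB
        exact ih A B' hAp hB'p hAs (fun v hv => hBs v (hB'sub v hv)) (by omega)
  exact key (A0.length + pB'.length) A0 pB' hA0p hB0p hA0s hB0s le_rfl

end AuxProof

/-- If `r` and `q` are useful separator paths, then for `0 ≤ i < |r| - 2`
the edge between `r_i` and `r_{i+2}` is not an edge of `q`. -/
theorem useful_chord_not_on_other
    {V : Type*} [Fintype V] (G : SimpleGraph V)
    (hconn : G.Connected) (hchordal : Chordal G)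
    (hnb : ∀ e : Sym2 V, ¬ G.IsBridge e)
    (w : Sym2 V → ℝ) (hw : EdgePos G w)
    (r q : List V)
    (hr : SeparatorPath G r) (hru : Useful w r)
    (hq : SeparatorPath G q) (hqu : Useful w q)
    (i : ℕ) (h : i + 2 < r.length) :
    s(r.get ⟨i, by omega⟩, r.get ⟨i + 2, h⟩) ∉ edgesOf q := by
  classical
  intro hmem
  obtain ⟨j, hj, heq⟩ := hmem
  have hux : G.Adj (r.get ⟨i, by omega⟩) (r.get ⟨i + 1, by omega⟩) :=
    adj_get hr.1.1 (by omega)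
  have hxv : G.Adj (r.get ⟨i + 1, by omega⟩) (r.get ⟨i + 2, h⟩) :=
    adj_get hr.1.1 (i := i + 1) (by omega)
  have qInj : ∀ {k l : ℕ} (hk : k < q.length) (hl : l < q.length),
      q.get ⟨k, hk⟩ = q.get ⟨l, hl⟩ → k = l := by
    intro k l hk hl hkl
    exact congrArg Fin.val ((List.Nodup.get_inj_iff hq.1.2).mp hkl)
  have hpos_ux : 0 < w s(r.get ⟨i, by omega⟩, r.get ⟨i + 1, by omega⟩) :=
    hw _ ((SimpleGraph.mem_edgeSet G).mpr hux)
  have hpos_xv : 0 < w s(r.get ⟨i + 1, by omega⟩, r.get ⟨i + 2, h⟩) :=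
    hw _ ((SimpleGraph.mem_edgeSet G).mpr hxv)
  have hru_i := hru i h
  by_cases hA : s(r.get ⟨i, by omega⟩, r.get ⟨i + 1, by omega⟩) ∈ edgesOf q
  · obtain ⟨k, hk, heqA⟩ := hA
    rcases Sym2.eq_iff.mp heq with ⟨h1, h2⟩ | ⟨h1, h2⟩ <;>
      rcases Sym2.eq_iff.mp heqA with ⟨h3, h4⟩ | ⟨h3, h4⟩
    · -- u = q_j, v = q_{j+1}, u = q_k, x = q_{k+1}
      have hjk : j = k := qInj _ _ (h1.symm.trans h3)
      have : r.get ⟨i + 1, by omega⟩ = r.get ⟨i + 2, h⟩ := by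
        rw [h4, h2, get_idx_congr q (show k + 1 = j + 1 from by omega)]
      exact absurd this hxv.ne
    · -- u = q_j, v = q_{j+1}, u = q_{k+1}, x = q_k
      have hjk : j = k + 1 := qInj _ _ (h1.symm.trans h3)
      have hq2 := hqu k (by omega)
      have e1 : q.get ⟨k, by omega⟩ = r.get ⟨i + 1, by omega⟩ := h4.symm
      have e2 : q.get ⟨k + 1, by omega⟩ = r.get ⟨i, by omega⟩ := h3.symm
      have e3 : q.get ⟨k + 2, by omega⟩ = r.get ⟨i + 2, h⟩ := by
        rw [get_idx_congr q (show k + 2 = j + 1 from by omega)]; exact h2.symm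
      rw [e1, e2, e3] at hq2
      have hsw : s(r.get ⟨i + 1, by omega⟩, r.get ⟨i, by omega⟩)
          = s(r.get ⟨i, by omega⟩, r.get ⟨i + 1, by omega⟩) := Sym2.eq_swap
      rw [hsw] at hq2
      linarith
    · -- u = q_{j+1}, v = q_j, u = q_k, x = q_{k+1}
      have hjk : j + 1 = k := qInj _ _ (h1.symm.trans h3)
      have hq2 := hqu j (by omega)
      have e1 : q.get ⟨j, by omega⟩ = r.get ⟨i + 2, h⟩ := h2.symm
      have e2 : q.get ⟨j + 1, by omega⟩ = r.get ⟨i, by omega⟩ := h1.symm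
      have e3 : q.get ⟨j + 2, by omega⟩ = r.get ⟨i + 1, by omega⟩ := by
        rw [get_idx_congr q (show j + 2 = k + 1 from by omega)]; exact h4.symm
      rw [e1, e2, e3] at hq2
      have hsw1 : s(r.get ⟨i + 2, h⟩, r.get ⟨i, by omega⟩)
          = s(r.get ⟨i, by omega⟩, r.get ⟨i + 2, h⟩) := Sym2.eq_swap
      have hsw2 : s(r.get ⟨i + 2, h⟩, r.get ⟨i + 1, by omega⟩)
          = s(r.get ⟨i + 1, by omega⟩, r.get ⟨i + 2, h⟩) := Sym2.eq_swap
      rw [hsw1, hsw2] at hq2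
      linarith
    · -- u = q_{j+1}, v = q_j, u = q_{k+1}, x = q_k
      have hjk : j + 1 = k + 1 := qInj _ _ (h1.symm.trans h3)
      have : r.get ⟨i + 1, by omega⟩ = r.get ⟨i + 2, h⟩ := by
        rw [h4, h2, get_idx_congr q (show k = j from by omega)]
      exact absurd this hxv.ne
  · by_cases hB : s(r.get ⟨i + 1, by omega⟩, r.get ⟨i + 2, h⟩) ∈ edgesOf q
    · obtain ⟨k, hk, heqB⟩ := hB
      rcases Sym2.eq_iff.mp heq with ⟨h1, h2⟩ | ⟨h1, h2⟩ <;>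
        rcases Sym2.eq_iff.mp heqB with ⟨h3, h4⟩ | ⟨h3, h4⟩
      · -- u = q_j, v = q_{j+1}; x = q_k, v = q_{k+1}
        have hjk : j + 1 = k + 1 := qInj _ _ (h2.symm.trans h4)
        have : r.get ⟨i, by omega⟩ = r.get ⟨i + 1, by omega⟩ := by
          rw [h1, h3, get_idx_congr q (show j = k from by omega)]
        exact absurd this hux.ne
      · -- u = q_j, v = q_{j+1}; x = q_{k+1}, v = q_k
        have hjk : j + 1 = k := qInj _ _ (h2.symm.trans h4)
        have hq2 := hqu j (by omega)
        have e1 : q.get ⟨j, by omega⟩ = r.get ⟨i, by omega⟩ := h1.symm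
        have e2 : q.get ⟨j + 1, by omega⟩ = r.get ⟨i + 2, h⟩ := h2.symm
        have e3 : q.get ⟨j + 2, by omega⟩ = r.get ⟨i + 1, by omega⟩ := by
          rw [get_idx_congr q (show j + 2 = k + 1 from by omega)]; exact h3.symm
        rw [e1, e2, e3] at hq2
        have hsw : s(r.get ⟨i + 2, h⟩, r.get ⟨i + 1, by omega⟩)
            = s(r.get ⟨i + 1, by omega⟩, r.get ⟨i + 2, h⟩) := Sym2.eq_swap
        rw [hsw] at hq2
        linarith
      · -- u = q_{j+1}, v = q_j; x = q_k, v = q_{k+1}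
        have hjk : j = k + 1 := qInj _ _ (h2.symm.trans h4)
        have hq2 := hqu k (by omega)
        have e1 : q.get ⟨k, by omega⟩ = r.get ⟨i + 1, by omega⟩ := h3.symm
        have e2 : q.get ⟨k + 1, by omega⟩ = r.get ⟨i + 2, h⟩ := h4.symm
        have e3 : q.get ⟨k + 2, by omega⟩ = r.get ⟨i, by omega⟩ := by
          rw [get_idx_congr q (show k + 2 = j + 1 from by omega)]; exact h1.symm
        rw [e1, e2, e3] at hq2
        have hsw1 : s(r.get ⟨i + 2, h⟩, r.get ⟨i, by omega⟩)
            = s(r.get ⟨i, by omega⟩, r.get ⟨i + 2, h⟩) := Sym2.eq_swap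
        have hsw2 : s(r.get ⟨i + 1, by omega⟩, r.get ⟨i, by omega⟩)
            = s(r.get ⟨i, by omega⟩, r.get ⟨i + 1, by omega⟩) := Sym2.eq_swap
        rw [hsw1, hsw2] at hq2
        linarith
      · -- u = q_{j+1}, v = q_j; x = q_{k+1}, v = q_k
        have hjk : j = k := qInj _ _ (h2.symm.trans h4)
        have : r.get ⟨i, by omega⟩ = r.get ⟨i + 1, by omega⟩ := by
          rw [h1, h3, get_idx_congr q (show j + 1 = k + 1 from by omega)]
        exact absurd this hux.ne
    · have hH1 : (G.deleteEdges (edgesOf q)).Adj (r.get ⟨i, by omega⟩)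
          (r.get ⟨i + 1, by omega⟩) := SimpleGraph.deleteEdges_adj.mpr ⟨hux, hA⟩
      have hH2 : (G.deleteEdges (edgesOf q)).Adj (r.get ⟨i + 1, by omega⟩)
          (r.get ⟨i + 2, h⟩) := SimpleGraph.deleteEdges_adj.mpr ⟨hxv, hB⟩
      have hreach : (G.deleteEdges (edgesOf q)).Reachable (q.get ⟨j, by omega⟩)
          (q.get ⟨j + 1, hj⟩) := by
        rcases Sym2.eq_iff.mp heq with ⟨h1, h2⟩ | ⟨h1, h2⟩
        · rw [← h1, ← h2]
          exact hH1.reachable.trans hH2.reachable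
        · rw [← h1, ← h2]
          exact (hH1.reachable.trans hH2.reachable).symm
      exact sep_alternate hconn hchordal hq hj hreach


end NSP
end
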